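/- Let P = [[-1, 0], [1, 1]], Q = [[2, -1], [-1, 1]], S = [[-1, 1], [0, 1]] (2×2 integer matrices) and A = [[P, Q], [O_2, S]]. Then A ∈ Sp(4, ℤ), ker(S - I_2) ⊆ ℚ² is one-dimensional spanned by (1, 2), and the signature of the form ⟨x,y⟩ = ᵗx·ᵗQ·y on ker(S - I_2) equals 1. -/

import Mathlib

open Matrix

/-- `A ∈ Sp(2g, ℤ)` (with index set `n` of cardinality `g`) iff `ᵗA·J·A = J`
where `J = [[0, I], [-I, 0]]`. -/
def IsSymplectic {n : Type*} [Fintype n] [DecidableEq n]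
    (A : Matrix (n ⊕ n) (n ⊕ n) ℤ) : Prop :=
  Aᵀ * fromBlocks 0 1 (-1) 0 * A = fromBlocks 0 1 (-1) 0

/-- The signature of a (symmetric) bilinear form. -/
noncomputable def formSign {R : Type*} [Field R] [LinearOrder R] [IsStrictOrderedRing R] {V : Type*}
    [AddCommGroup V] [Module R V] (B : V → V → R) : ℤ :=
  ((sSup {n : ℕ | ∃ W : Submodule R V, Module.finrank R W = n ∧
      ∀ x ∈ W, x ≠ 0 → 0 < B x x} : ℕ) : ℤ)
  - ((sSup {n : ℕ | ∃ W : Submodule R V, Module.finrank R W = n ∧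
      ∀ x ∈ W, x ≠ 0 → B x x < 0} : ℕ) : ℤ)

/-- `φ_g^V` of the upper-triangular symplectic matrix `[[P, Q], [0, S]]`:
the signature of the form `⟨x, y⟩ = ᵗx·ᵗQ·y` on `ker(S - I) ⊆ ℚ^g`. -/
noncomputable def phiV {n : Type*} [Fintype n] [DecidableEq n]
    (Q S : Matrix n n ℤ) : ℤ :=
  formSign (fun x y : LinearMap.ker ((S.map ((↑) : ℤ → ℚ) - 1).mulVecLin) =>
    (x : n → ℚ) ⬝ᵥ (Q.map ((↑) : ℤ → ℚ))ᵀ *ᵥ (y : n → ℚ))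

/-- The computation of `φ_2^V(s_1) = 1`. -/
theorem phiV_s1 :
    IsSymplectic (fromBlocks !![-1, 0; 1, 1] !![2, -1; -1, 1] 0
        !![-1, 1; 0, 1]) ∧
    LinearMap.ker (((!![-1, 1; 0, 1] : Matrix (Fin 2) (Fin 2) ℤ).map
          ((↑) : ℤ → ℚ) - 1).mulVecLin)
      = Submodule.span ℚ {![(1 : ℚ), 2]} ∧
    phiV !![2, -1; -1, 1] !![-1, 1; 0, 1] = 1 := by

  refine ⟨?_, ?_, ?_⟩
  · show _ = _
    ext i j
    rcases i with i | i <;> rcases j with j | j <;> fin_cases i <;> fin_cases j <;>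
      simp [Matrix.mul_apply, Fin.sum_univ_succ, Matrix.fromBlocks, Matrix.one_apply]
  · have hM : ((!![-1, 1; 0, 1] : Matrix (Fin 2) (Fin 2) ℤ).map ((↑) : ℤ → ℚ) - 1) = !![-2,1;0,0] := by
      ext i j; fin_cases i <;> fin_cases j <;> simp [Matrix.map, Matrix.one_apply] <;> norm_num
    rw [hM]
    ext x
    simp only [LinearMap.mem_ker, Matrix.mulVecLin_apply, Submodule.mem_span_singleton]
    constructor
    · intro h
      have h0 := congrFun h 0
      simp [Matrix.mulVec, dotProduct, Fin.sum_univ_succ] at h0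
      exact ⟨x 0, by funext i; fin_cases i <;> simp <;> linarith⟩
    · rintro ⟨c, rfl⟩
      funext i
      fin_cases i <;> simp [Matrix.mulVec, dotProduct, Fin.sum_univ_succ] <;> ring
  · have hM : ((!![-1, 1; 0, 1] : Matrix (Fin 2) (Fin 2) ℤ).map ((↑) : ℤ → ℚ) - 1) = !![-2,1;0,0] := by
      ext i j; fin_cases i <;> fin_cases j <;> simp [Matrix.map, Matrix.one_apply] <;> norm_num
    set K := LinearMap.ker (((!![-1, 1; 0, 1] : Matrix (Fin 2) (Fin 2) ℤ).map
            ((↑) : ℤ → ℚ) - 1).mulVecLin) with hK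
    have hker : K = Submodule.span ℚ {![(1 : ℚ), 2]} := by
      rw [hK, hM]
      ext x
      simp only [LinearMap.mem_ker, Matrix.mulVecLin_apply, Submodule.mem_span_singleton]
      constructor
      · intro h
        have h0 := congrFun h 0
        simp [Matrix.mulVec, dotProduct, Fin.sum_univ_succ] at h0
        exact ⟨x 0, by funext i; fin_cases i <;> simp <;> linarith⟩
      · rintro ⟨c, rfl⟩
        funext i
        fin_cases i <;> simp [Matrix.mulVec, dotProduct, Fin.sum_univ_succ] <;> ring
    have hv : (![(1 : ℚ), 2]) ≠ 0 := by
      intro h; have := congrFun h 0; simp at this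
    have hrank : Module.finrank ℚ K = 1 := by
      rw [hker]; exact finrank_span_singleton hv
    set B : K → K → ℚ := fun x y =>
      (x : Fin 2 → ℚ) ⬝ᵥ ((!![2, -1; -1, 1] : Matrix (Fin 2) (Fin 2) ℤ).map ((↑) : ℤ → ℚ))ᵀ *ᵥ (y : Fin 2 → ℚ) with hB
    have hpos : ∀ x : K, x ≠ 0 → 0 < B x x := by
      rintro ⟨x, hx⟩ hne
      have hx' : x 1 = 2 * x 0 := by
        rw [hK, LinearMap.mem_ker, hM] at hx
        have h0 := congrFun hx 0
        simp [Matrix.mulVecLin_apply, Matrix.mulVec, dotProduct, Fin.sum_univ_succ] at h0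
        linarith
      have hx0 : x 0 ≠ 0 := by
        intro h0
        apply hne
        ext i
        fin_cases i <;> simp [h0, hx']
      have : B ⟨x, hx⟩ ⟨x, hx⟩ = 2 * (x 0)^2 := by
        simp [hB, Matrix.mulVec, dotProduct, Fin.sum_univ_succ, Matrix.map, hx']
        ring
      rw [this]
      positivity
    set Spos : Set ℕ := {n : ℕ | ∃ W : Submodule ℚ K, Module.finrank ℚ W = n ∧
        ∀ x ∈ W, x ≠ 0 → 0 < B x x} with hSposdef
    set Sneg : Set ℕ := {n : ℕ | ∃ W : Submodule ℚ K, Module.finrank ℚ W = n ∧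
        ∀ x ∈ W, x ≠ 0 → B x x < 0} with hSnegdef
    have hbound : ∀ (W : Submodule ℚ K), Module.finrank ℚ W ≤ 1 := fun W => by
      calc Module.finrank ℚ W ≤ Module.finrank ℚ K := Submodule.finrank_le W
        _ = 1 := hrank
    have hmemp : (1 : ℕ) ∈ Spos :=
      ⟨⊤, by rw [finrank_top]; exact hrank, fun x _ => hpos x⟩
    have hmemn : (0 : ℕ) ∈ Sneg := ⟨⊥, by simp, by simp⟩
    have hSpos : sSup Spos = 1 := by
      apply le_antisymm
      · apply csSup_le ⟨1, hmemp⟩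
        rintro n ⟨W, rfl, -⟩
        exact hbound W
      · exact le_csSup ⟨1, by rintro n ⟨W, rfl, -⟩; exact hbound W⟩ hmemp
    have hSneg : sSup Sneg = 0 := by
      apply Nat.le_zero.mp
      apply csSup_le ⟨0, hmemn⟩
      rintro n ⟨W, rfl, hW⟩
      have : W = ⊥ := by
        rw [Submodule.eq_bot_iff]
        intro x hx
        by_contra hne
        exact absurd (hpos x hne) (not_lt.mpr (hW x hx hne).le)
      simp [this]
    show formSign B = 1
    rw [formSign, hSpos, hSneg]
    norm_num
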